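/- With s(θ) = o + 2C^o(θ)u(θ) and b(θ) as in the previous statement, the vector s(θ) − b(θ) is orthogonal to the tangent space of the surface θ ↦ s(θ) at s(θ); explicitly, (∇s(θ))ᵀ(s(θ) − b(θ)) = 0 for all θ. -/

import Mathlib

open scoped RealInnerProductSpace

/-- Orthogonality: with `s(θ) = o + 2C^o(θ)u(θ)` and
`b(θ) = o + C^o(θ)u(θ) + ∇u(θ) g(θ)⁻¹ (∇C^o(θ))ᵀ` (where
`w(θ) = g(θ)⁻¹(∇C^o(θ))ᵀ` is characterized by `(∇u)ᵀ∇u w = ∇C^o`),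
the vector `s(θ) - b(θ)` is orthogonal to the tangent space of the surface
`θ ↦ s(θ)` at `s(θ)`: `(∇s(θ))ᵀ(s(θ) - b(θ)) = 0`. -/
theorem stmt_16 {m : ℕ} (Θ : Set (EuclideanSpace ℝ (Fin m))) (hΘ : IsOpen Θ)
    (u : EuclideanSpace ℝ (Fin m) → EuclideanSpace ℝ (Fin (m + 1)))
    (Co : EuclideanSpace ℝ (Fin m) → ℝ)
    (o : EuclideanSpace ℝ (Fin (m + 1)))
    (hu : ∀ θ ∈ Θ, ‖u θ‖ = 1)
    (husmooth : ∀ θ ∈ Θ, ContDiffAt ℝ 1 u θ)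
    (hreg : ∀ θ ∈ Θ, Function.Injective (fderiv ℝ u θ))
    (hCo : ∀ θ ∈ Θ, 0 < Co θ)
    (hCosmooth : ∀ θ ∈ Θ, ContDiffAt ℝ 1 Co θ)
    (w : EuclideanSpace ℝ (Fin m) → EuclideanSpace ℝ (Fin m))
    (hw : ∀ θ ∈ Θ, ContinuousLinearMap.adjoint (fderiv ℝ u θ)
        (fderiv ℝ u θ (w θ)) = gradient Co θ)
    (s b : EuclideanSpace ℝ (Fin m) → EuclideanSpace ℝ (Fin (m + 1)))
    (hs : s = fun θ => o + (2 * Co θ) • u θ)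
    (hb : b = fun θ => o + Co θ • u θ + fderiv ℝ u θ (w θ)) :
    ∀ θ ∈ Θ, ∀ v : EuclideanSpace ℝ (Fin m),
      ⟪fderiv ℝ s θ v, s θ - b θ⟫ = 0 := by
  subst hs hb
  intro θ hθ v
  have hud : DifferentiableAt ℝ u θ := (husmooth θ hθ).differentiableAt one_ne_zero
  have hCd : DifferentiableAt ℝ Co θ := (hCosmooth θ hθ).differentiableAt one_ne_zero
  set D := fderiv ℝ u θ with hD
  set c' := fderiv ℝ Co θ with hc'
  -- derivative of s
  have h2C : DifferentiableAt ℝ (fun θ => 2 * Co θ) θ := hCd.const_mul 2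
  have hsd : fderiv ℝ (fun θ => o + (2 * Co θ) • u θ) θ
      = fderiv ℝ (fun θ => (2 * Co θ) • u θ) θ := fderiv_const_add o
  have hsmul : fderiv ℝ (fun θ => (2 * Co θ) • u θ) θ
      = (2 * Co θ) • D + (fderiv ℝ (fun θ => 2 * Co θ) θ).smulRight (u θ) :=
    fderiv_smul h2C hud
  have h2c' : fderiv ℝ (fun θ => 2 * Co θ) θ = (2:ℝ) • c' := by
    rw [hc']; exact fderiv_const_mul hCd 2
  have hsv : fderiv ℝ (fun θ => o + (2 * Co θ) • u θ) θ v
      = (2 * Co θ) • D v + (2 * c' v) • u θ := by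
    rw [hsd, hsmul, h2c']
    simp [two_smul, ContinuousLinearMap.smulRight_apply, mul_smul, smul_smul,
      two_mul, add_smul]
  -- ⟪D x, u θ⟫ = 0 for all x
  have horth : ∀ x : EuclideanSpace ℝ (Fin m), ⟪D x, u θ⟫ = 0 := by
    intro x
    have hFconst : (fun θ => (⟪u θ, u θ⟫ : ℝ)) =ᶠ[nhds θ] fun _ => (1:ℝ) := by
      filter_upwards [hΘ.mem_nhds hθ] with y hy
      have := hu y hy
      rw [real_inner_self_eq_norm_sq, this]; norm_num
    have hF0 : fderiv ℝ (fun θ => (⟪u θ, u θ⟫ : ℝ)) θ = 0 := by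
      rw [hFconst.fderiv_eq]; exact fderiv_const_apply 1
    have hF : HasFDerivAt (fun θ => (⟪u θ, u θ⟫ : ℝ))
        ((fderivInnerCLM ℝ (u θ, u θ)).comp ((D).prod (D))) θ :=
      (hud.hasFDerivAt).inner ℝ (hud.hasFDerivAt)
    have heq := hF.fderiv
    rw [hF0] at heq
    have h0 : (0 : ℝ) = ⟪u θ, D x⟫ + ⟪D x, u θ⟫ := by
      have h := congrArg (fun L : EuclideanSpace ℝ (Fin m) →L[ℝ] ℝ => L x) heq
      simpa only [ContinuousLinearMap.zero_apply, ContinuousLinearMap.comp_apply,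
        ContinuousLinearMap.prod_apply, fderivInnerCLM_apply] using h
    have hsym := real_inner_comm (u θ) (D x)
    linarith
  have hDu : ⟪D v, u θ⟫ = 0 := horth v
  have huD : ⟪u θ, D v⟫ = 0 := by rw [real_inner_comm]; exact horth v
  have huDw : ⟪u θ, D (w θ)⟫ = 0 := by rw [real_inner_comm]; exact horth (w θ)
  -- ⟪D v, D (w θ)⟫ = c' v
  have hDw : ⟪D v, D (w θ)⟫ = c' v := by
    have h1 : ⟪ContinuousLinearMap.adjoint D (D (w θ)), v⟫ = ⟪D (w θ), D v⟫ :=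
      ContinuousLinearMap.adjoint_inner_left D v (D (w θ))
    rw [hw θ hθ] at h1
    have h2 : ⟪gradient Co θ, v⟫ = c' v := by
      rw [gradient]; exact InnerProductSpace.toDual_symm_apply
    linarith [h1, h2, real_inner_comm (D v) (D (w θ))]
  rw [hsv]
  show ⟪(2 * Co θ) • D v + (2 * c' v) • u θ,
      (o + (2 * Co θ) • u θ) - (o + Co θ • u θ + D (w θ))⟫ = 0
  have hrw : (o + (2 * Co θ) • u θ) - (o + Co θ • u θ + D (w θ))
      = Co θ • u θ - D (w θ) := by
    have h : (2 : ℝ) * Co θ = Co θ + Co θ := by ring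
    rw [h, add_smul]; abel
  rw [hrw, inner_add_left, inner_sub_right, inner_sub_right,
    real_inner_smul_left, real_inner_smul_left, real_inner_smul_left,
    real_inner_smul_left, real_inner_smul_right, real_inner_smul_right]
  have huu : ⟪u θ, u θ⟫ = 1 := by
    rw [real_inner_self_eq_norm_sq, hu θ hθ]; norm_num
  rw [hDu, hDw, huu, huDw]
  ring
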